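/- Let A ∈ ℂ^{n×n} be unitary with all entries nonzero (A_{ij} ≠ 0 for all i,j). Then the expected squared Frobenius norm of the residual after one step of randomly pivoted LU equals Σ_{i,j} (|A_{ij}|²/‖A‖_F²) · ‖A − (1/A_{ij})·A e_j e_i^T A‖_F² = 2(n − 1) = 2·‖A − ⟦A⟧_1‖_F², where ⟦A⟧_1 is the best rank-1 approximation of A. -/

import Mathlib

open Matrix Finset

/-- Squared Frobenius norm of a complex matrix, `‖A‖_F² = tr(AᴴA)`. -/
noncomputable def frobSq {n m : ℕ} (A : Matrix (Fin n) (Fin m) ℂ) : ℝ :=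
  ∑ i, ∑ j, ‖A i j‖ ^ 2

/-- `tailTrace M hM r` is the sum of the eigenvalues of the Hermitian matrix `M`
after (excluding) the `r` largest; for `M = AᴴA` it equals `‖A − ⟦A⟧ᵣ‖_F²`. -/
noncomputable def tailTrace {p : ℕ} (M : Matrix (Fin p) (Fin p) ℂ) (hM : M.IsHermitian)
    (r : ℕ) : ℝ :=
  ∑ j ∈ Finset.univ.filter (fun j : Fin p => (j : ℕ) < p - r),
    hM.eigenvalues (Tuple.sort hM.eigenvalues j)

lemma my_eigenvalues_one {p : ℕ} (h : (1 : Matrix (Fin p) (Fin p) ℂ).IsHermitian) (i : Fin p) :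
    h.eigenvalues i = 1 := by
  rw [h.eigenvalues_eq, Matrix.one_mulVec, dotProduct_comm, ← EuclideanSpace.inner_eq_star_dotProduct,
    inner_self_eq_norm_sq_to_K]
  simp [h.eigenvectorBasis.orthonormal.1 i]

lemma my_tailTrace_one {p : ℕ} (hp : 0 < p) (M : Matrix (Fin p) (Fin p) ℂ)
    (hM : M.IsHermitian) (h1 : M = 1) : tailTrace M hM 1 = (p : ℝ) - 1 := by
  subst h1
  unfold tailTrace
  have he : ∀ i, hM.eigenvalues i = 1 := my_eigenvalues_one hM
  simp only [he]
  rw [Finset.sum_const, nsmul_eq_mul, mul_one]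
  have : (Finset.univ.filter (fun j : Fin p => (j : ℕ) < p - 1)) =
      Finset.Iio (⟨p - 1, Nat.sub_lt hp one_pos⟩ : Fin p) := by
    ext j; simp [Fin.lt_def]
  rw [this, Fin.card_Iio]
  simp only [Fin.val_mk]
  rw [Nat.cast_sub (by omega : 1 ≤ p)]
  simp

lemma my_entry {n : ℕ} (A : Matrix (Fin n) (Fin n) ℂ) (i j p q : Fin n) :
    (A * Matrix.single j i (1 : ℂ) * A) p q = A p j * A i q := by
  rw [Matrix.mul_assoc, Matrix.mul_apply]
  simp [Matrix.mul_single_apply_same, Matrix.single, Matrix.mul_apply,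
    ite_and, mul_ite, ite_mul]


/-- **Theorem (one-step RPLU residual on a dense unitary matrix).**
If `A ∈ ℂ^{n×n}` (`n ≥ 1`) is unitary and all its entries are nonzero, then the expected
squared Frobenius norm of the residual after one step of randomly pivoted LU satisfies
`∑_{i,j} (|A_{ij}|²/‖A‖_F²) ‖A − A_{ij}⁻¹ A e_j e_iᵀ A‖_F² = 2(n−1) = 2‖A − ⟦A⟧₁‖_F²`. -/
theorem rplu_unitary_one_step {n : ℕ} (hn : 0 < n) (A : Matrix (Fin n) (Fin n) ℂ)
    (hunit : Aᴴ * A = 1) (hA : ∀ i j, A i j ≠ 0) :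
    (∑ i : Fin n, ∑ j : Fin n,
        (‖A i j‖ ^ 2 / frobSq A) *
          frobSq (A - (A i j)⁻¹ • (A * Matrix.single j i (1 : ℂ) * A)))
      = 2 * ((n : ℝ) - 1) ∧
    2 * ((n : ℝ) - 1)
      = 2 * tailTrace (Aᴴ * A) (Matrix.isHermitian_conjTranspose_mul_self A) 1 := by
  have hunit' : A * Aᴴ = 1 := mul_eq_one_comm.mp hunit
  have horth : ∀ j q : Fin n, ∑ p, (starRingEnd ℂ) (A p j) * A p q
      = if j = q then 1 else 0 := by
    intro j q
    have := congrFun (congrFun hunit j) q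
    simpa [Matrix.mul_apply, Matrix.one_apply, Matrix.conjTranspose_apply] using this
  have hcol : ∀ j : Fin n, ∑ p, Complex.normSq (A p j) = 1 := by
    intro j
    have h := horth j j
    simp only [eq_self_iff_true, if_true] at h
    have : ((∑ p, Complex.normSq (A p j) : ℝ) : ℂ) = ((1 : ℝ) : ℂ) := by
      push_cast
      rw [← h]
      exact Finset.sum_congr rfl fun p _ => Complex.normSq_eq_conj_mul_self
    exact_mod_cast this
  have hrow : ∀ i : Fin n, ∑ q, Complex.normSq (A i q) = 1 := by
    intro i
    have h := congrFun (congrFun hunit' i) i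
    simp only [Matrix.mul_apply, Matrix.one_apply, eq_self_iff_true, if_true,
      Matrix.conjTranspose_apply] at h
    have : ((∑ q, Complex.normSq (A i q) : ℝ) : ℂ) = ((1 : ℝ) : ℂ) := by
      push_cast
      rw [← h]
      refine Finset.sum_congr rfl fun q _ => ?_
      rw [mul_comm]
      exact Complex.normSq_eq_conj_mul_self
    exact_mod_cast this
  have hnorm : ∀ z : ℂ, ‖z‖ ^ 2 = Complex.normSq z := fun z => by
    rw [Complex.sq_norm]
  have hsumA : ∑ p : Fin n, ∑ q : Fin n, Complex.normSq (A p q) = n := by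
    rw [Finset.sum_comm]
    simp [hcol]
  have hfrobA : frobSq A = n := by
    unfold frobSq
    simp only [hnorm]
    exact hsumA
  -- residual norm
  have hres : ∀ i j : Fin n,
      frobSq (A - (A i j)⁻¹ • (A * Matrix.single j i (1 : ℂ) * A))
        = (n : ℝ) - 2 + (Complex.normSq (A i j))⁻¹ := by
    intro i j
    have h0 : (starRingEnd ℂ) (A i j) ≠ 0 := by
      simpa using hA i j
    have hent : ∀ p q, (A - (A i j)⁻¹ • (A * Matrix.single j i (1 : ℂ) * A)) p q
        = A p q - (A i j)⁻¹ * (A p j * A i q) := by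
      intro p q
      simp [my_entry, Matrix.sub_apply, Matrix.smul_apply, smul_eq_mul]
    unfold frobSq
    simp only [hent, hnorm, Complex.normSq_sub]
    have e1 : ∀ p q : Fin n, Complex.normSq ((A i j)⁻¹ * (A p j * A i q))
        = (Complex.normSq (A i j))⁻¹ * (Complex.normSq (A p j) * Complex.normSq (A i q)) := by
      intro p q
      simp [Complex.normSq_mul, Complex.normSq_inv]
    have hS2 : ∑ p : Fin n, ∑ q : Fin n, Complex.normSq ((A i j)⁻¹ * (A p j * A i q))
        = (Complex.normSq (A i j))⁻¹ := by
      simp only [e1]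
      calc ∑ p : Fin n, ∑ q : Fin n,
            (Complex.normSq (A i j))⁻¹ * (Complex.normSq (A p j) * Complex.normSq (A i q))
          = (Complex.normSq (A i j))⁻¹ *
              ∑ p : Fin n, ∑ q : Fin n, Complex.normSq (A p j) * Complex.normSq (A i q) := by
            rw [Finset.mul_sum]
            exact Finset.sum_congr rfl fun p _ => by rw [Finset.mul_sum]
        _ = (Complex.normSq (A i j))⁻¹ *
              ((∑ p, Complex.normSq (A p j)) * (∑ q, Complex.normSq (A i q))) := by
            rw [Finset.sum_mul_sum]
        _ = (Complex.normSq (A i j))⁻¹ := by rw [hcol, hrow]; ring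
    have hC : ∑ p : Fin n, ∑ q : Fin n,
        A p q * (starRingEnd ℂ) ((A i j)⁻¹ * (A p j * A i q)) = 1 := by
      rw [Finset.sum_comm]
      have e2 : ∀ q : Fin n, ∑ p, A p q * (starRingEnd ℂ) ((A i j)⁻¹ * (A p j * A i q))
          = (∑ p, (starRingEnd ℂ) (A p j) * A p q) *
              (((starRingEnd ℂ) (A i j))⁻¹ * (starRingEnd ℂ) (A i q)) := by
        intro q
        rw [Finset.sum_mul]
        refine Finset.sum_congr rfl fun p _ => ?_
        simp only [_root_.map_mul, map_inv₀]
        ring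
      simp only [e2, horth, ite_mul, one_mul, zero_mul]
      rw [Finset.sum_ite_eq]
      simp only [Finset.mem_univ, if_true]
      exact inv_mul_cancel₀ h0
    have hS3 : ∑ p : Fin n, ∑ q : Fin n,
        (A p q * (starRingEnd ℂ) ((A i j)⁻¹ * (A p j * A i q))).re = 1 := by
      have : ∑ p : Fin n, ∑ q : Fin n,
          (A p q * (starRingEnd ℂ) ((A i j)⁻¹ * (A p j * A i q))).re
          = (∑ p : Fin n, ∑ q : Fin n,
              A p q * (starRingEnd ℂ) ((A i j)⁻¹ * (A p j * A i q))).re := by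
        rw [Complex.re_sum]
        exact Finset.sum_congr rfl fun p _ => (Complex.re_sum _ _).symm
      rw [this, hC, Complex.one_re]
    simp only [Finset.sum_sub_distrib, Finset.sum_add_distrib, ← Finset.mul_sum]
    rw [hsumA, hS2, hS3]
    ring
  -- final summation
  constructor
  · simp only [hres, hfrobA, hnorm]
    have hn0 : (n : ℝ) ≠ 0 := Nat.cast_ne_zero.mpr hn.ne'
    have hterm : ∀ i j : Fin n,
        Complex.normSq (A i j) / (n : ℝ) * ((n : ℝ) - 2 + (Complex.normSq (A i j))⁻¹)
          = Complex.normSq (A i j) * (((n : ℝ) - 2) / n) + 1 / n := by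
      intro i j
      have h0 : Complex.normSq (A i j) ≠ 0 := by
        simpa [Complex.normSq_eq_zero] using hA i j
      field_simp
    simp only [hterm, Finset.sum_add_distrib, ← Finset.sum_mul, Finset.sum_const,
      Finset.card_univ, Fintype.card_fin, nsmul_eq_mul]
    rw [hsumA]
    field_simp
    ring
  · rw [my_tailTrace_one hn _ _ hunit]
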